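/- arXiv:2506.07404 — 2 statements merged into one kernel-verified Lean document; each statement's English description precedes it below -/
import Mathlib

section
/- Conservation of entropy under the Arıkan transform for two (possibly different) BSCs: h₂(p₁ ⋆ p₂) + h₂⁺ = h₂(p₁) + h₂(p₂), where h₂⁺ = H(U₂ | Y₁, Y₂, U₁) is the conditional entropy of the plus channel input; equivalently, the sum of the plus- and minus-channel conditional entropies equals the sum of the original channel entropies. -/
noncomputable def binH (p : ℝ) : ℝ := -p * Real.logb 2 p - (1 - p) * Real.logb 2 (1 - p)

/-- binary convolution `a ⋆ b`. -/
def bconv (a b : ℝ) : ℝ := a * (1 - b) + b * (1 - a)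

/-- Bernoulli(p) pmf on `ZMod 2`. -/
noncomputable def ber (p : ℝ) (e : ZMod 2) : ℝ := if e = 1 then p else 1 - p

/-- Sample space: `(u₁, u₂, e₁, e₂)`. -/
abbrev Ω4 : Type := ZMod 2 × ZMod 2 × ZMod 2 × ZMod 2

/-- Joint probability: `U₁, U₂` i.i.d. uniform, `E₁ ~ Ber(p₁)`, `E₂ ~ Ber(p₂)`, all independent. -/
noncomputable def jointP (p₁ p₂ : ℝ) (ω : Ω4) : ℝ :=
  (1/4) * ber p₁ ω.2.2.1 * ber p₂ ω.2.2.2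

/-- Conditional entropy `H(A | B)` (in bits) of random variables on the finite space `Ω4`
weighted by `jointP p₁ p₂`. -/
noncomputable def condEnt {α β : Type*} [Fintype α] [DecidableEq α] [Fintype β] [DecidableEq β]
    (p₁ p₂ : ℝ) (A : Ω4 → α) (B : Ω4 → β) : ℝ :=
  -∑ a : α, ∑ b : β,
    (∑ ω : Ω4, if A ω = a ∧ B ω = b then jointP p₁ p₂ ω else 0) *
      Real.logb 2 ((∑ ω : Ω4, if A ω = a ∧ B ω = b then jointP p₁ p₂ ω else 0) /
        (∑ ω : Ω4, if B ω = b then jointP p₁ p₂ ω else 0))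

/-- `U₁` -/
def U₁ (ω : Ω4) : ZMod 2 := ω.1
/-- `U₂` -/
def U₂ (ω : Ω4) : ZMod 2 := ω.2.1
/-- `Y₁ = (U₁ ⊕ U₂) ⊕ E₁` -/
def Y₁ (ω : Ω4) : ZMod 2 := ω.1 + ω.2.1 + ω.2.2.1
/-- `Y₂ = U₂ ⊕ E₂` -/
def Y₂ (ω : Ω4) : ZMod 2 := ω.2.1 + ω.2.2.2

lemma sum_zmod2 (f : ZMod 2 → ℝ) : ∑ x, f x = f 0 + f 1 := by
  rw [show (Finset.univ : Finset (ZMod 2)) = {0, 1} by decide]; simp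
lemma z2 (x : ZMod 2) : x = 0 ∨ x = 1 := by revert x; decide
lemma m1 (p₁ p₂ : ℝ) (a b₁ b₂ : ZMod 2) :
    (∑ ω : Ω4, if U₁ ω = a ∧ (Y₁ ω, Y₂ ω) = (b₁, b₂) then jointP p₁ p₂ ω else 0)
      = (1/4) * ber (bconv p₁ p₂) (a + b₁ + b₂) := by
  rcases z2 a with rfl | rfl <;> rcases z2 b₁ with rfl | rfl <;> rcases z2 b₂ with rfl | rfl <;>
    simp (config := { decide := true }) only [Fintype.sum_prod_type, sum_zmod2, jointP, ber,
      bconv, U₁, Y₁, Y₂, Prod.mk.injEq, if_true, if_false, and_true, and_false, true_and,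
      false_and, and_self] <;> ring
lemma m0 (p₁ p₂ : ℝ) (b₁ b₂ : ZMod 2) :
    (∑ ω : Ω4, if (Y₁ ω, Y₂ ω) = (b₁, b₂) then jointP p₁ p₂ ω else 0) = 1/4 := by
  fin_cases b₁ <;> fin_cases b₂ <;>
    simp (config := { decide := true }) only [Fintype.sum_prod_type, sum_zmod2, jointP, ber,
      U₁, Y₁, Y₂, Prod.mk.injEq, if_true, if_false, and_true, and_false, true_and,
      false_and, and_self] <;> ring

lemma mA (p₁ p₂ : ℝ) (a b₁ b₂ c : ZMod 2) :
    (∑ ω : Ω4, if U₂ ω = a ∧ (Y₁ ω, Y₂ ω, U₁ ω) = (b₁, b₂, c) then jointP p₁ p₂ ω else 0)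
      = (1/4) * (ber p₁ (b₁ + c + a) * ber p₂ (b₂ + a)) := by
  rcases z2 a with rfl | rfl <;> rcases z2 b₁ with rfl | rfl <;> rcases z2 b₂ with rfl | rfl <;>
    rcases z2 c with rfl | rfl <;>
    simp (config := { decide := true }) only [Fintype.sum_prod_type, sum_zmod2, jointP, ber,
      U₁, U₂, Y₁, Y₂, Prod.mk.injEq, if_true, if_false, and_true, and_false, true_and,
      false_and, and_self] <;> ring

lemma mB (p₁ p₂ : ℝ) (b₁ b₂ c : ZMod 2) :
    (∑ ω : Ω4, if (Y₁ ω, Y₂ ω, U₁ ω) = (b₁, b₂, c) then jointP p₁ p₂ ω else 0)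
      = (1/4) * ber (bconv p₁ p₂) (b₁ + b₂ + c) := by
  fin_cases b₁ <;> fin_cases b₂ <;> fin_cases c <;>
    simp (config := { decide := true }) only [Fintype.sum_prod_type, sum_zmod2, jointP, ber,
      bconv, U₁, U₂, Y₁, Y₂, Prod.mk.injEq, if_true, if_false, and_true, and_false, true_and,
      false_and, and_self] <;> ring

lemma mC (p₁ p₂ : ℝ) (a₁ a₂ b₁ b₂ : ZMod 2) :
    (∑ ω : Ω4, if (U₁ ω, U₂ ω) = (a₁, a₂) ∧ (Y₁ ω, Y₂ ω) = (b₁, b₂) then jointP p₁ p₂ ω else 0)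
      = (1/4) * (ber p₁ (b₁ + a₁ + a₂) * ber p₂ (b₂ + a₂)) := by
  fin_cases a₁ <;> fin_cases a₂ <;> fin_cases b₁ <;> fin_cases b₂ <;>
    simp (config := { decide := true }) only [Fintype.sum_prod_type, sum_zmod2, jointP, ber,
      U₁, U₂, Y₁, Y₂, Prod.mk.injEq, if_true, if_false, and_true, and_false, true_and,
      false_and, and_self] <;> ring
lemma m1' (p₁ p₂ : ℝ) (a : ZMod 2) (b : ZMod 2 × ZMod 2) :
    (∑ ω : Ω4, if U₁ ω = a ∧ (Y₁ ω, Y₂ ω) = b then jointP p₁ p₂ ω else 0)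
      = (1/4) * ber (bconv p₁ p₂) (a + b.1 + b.2) := by
  obtain ⟨b₁, b₂⟩ := b; exact m1 p₁ p₂ a b₁ b₂

lemma m0' (p₁ p₂ : ℝ) (b : ZMod 2 × ZMod 2) :
    (∑ ω : Ω4, if (Y₁ ω, Y₂ ω) = b then jointP p₁ p₂ ω else 0) = 1/4 := by
  obtain ⟨b₁, b₂⟩ := b; exact m0 p₁ p₂ b₁ b₂

lemma mA' (p₁ p₂ : ℝ) (a : ZMod 2) (b : ZMod 2 × ZMod 2 × ZMod 2) :
    (∑ ω : Ω4, if U₂ ω = a ∧ (Y₁ ω, Y₂ ω, U₁ ω) = b then jointP p₁ p₂ ω else 0)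
      = (1/4) * (ber p₁ (b.1 + b.2.2 + a) * ber p₂ (b.2.1 + a)) := by
  obtain ⟨b₁, b₂, c⟩ := b; exact mA p₁ p₂ a b₁ b₂ c

lemma mB' (p₁ p₂ : ℝ) (b : ZMod 2 × ZMod 2 × ZMod 2) :
    (∑ ω : Ω4, if (Y₁ ω, Y₂ ω, U₁ ω) = b then jointP p₁ p₂ ω else 0)
      = (1/4) * ber (bconv p₁ p₂) (b.1 + b.2.1 + b.2.2) := by
  obtain ⟨b₁, b₂, c⟩ := b; exact mB p₁ p₂ b₁ b₂ c

lemma mC' (p₁ p₂ : ℝ) (a : ZMod 2 × ZMod 2) (b : ZMod 2 × ZMod 2) :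
    (∑ ω : Ω4, if (U₁ ω, U₂ ω) = a ∧ (Y₁ ω, Y₂ ω) = b then jointP p₁ p₂ ω else 0)
      = (1/4) * (ber p₁ (b.1 + a.1 + a.2) * ber p₂ (b.2 + a.2)) := by
  obtain ⟨a₁, a₂⟩ := a; obtain ⟨b₁, b₂⟩ := b; exact mC p₁ p₂ a₁ a₂ b₁ b₂

lemma qd (x : ℝ) : (1/4 * x) / (1/4 : ℝ) = x := by ring
lemma qd2 (x y : ℝ) : (1/4 * x) / (1/4 * y : ℝ) = x / y :=
  mul_div_mul_left x y (by norm_num)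

lemma E1 (p₁ p₂ : ℝ) :
    condEnt p₁ p₂ U₁ (fun ω => (Y₁ ω, Y₂ ω)) = binH (bconv p₁ p₂) := by
  simp only [condEnt, m1', m0', qd]
  simp only [Fintype.sum_prod_type, sum_zmod2]
  simp (config := { decide := true }) only [ber, if_true, if_false]
  unfold binH; ring
lemma L2 (x y : ℝ) (hx : 0 ≤ x) (hy : 0 ≤ y) :
    x * y * Real.logb 2 (x * y) = x * y * Real.logb 2 x + x * y * Real.logb 2 y := by
  rcases eq_or_lt_of_le hx with h | h
  · simp [← h]
  rcases eq_or_lt_of_le hy with h' | h'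
  · simp [← h']
  rw [Real.logb_mul h.ne' h'.ne']; ring

lemma L1 (x y : ℝ) (hx : 0 ≤ x) (hy : 0 ≤ y) :
    x * Real.logb 2 (x / (x + y)) + y * Real.logb 2 (y / (x + y))
      = x * Real.logb 2 x + y * Real.logb 2 y - (x + y) * Real.logb 2 (x + y) := by
  rcases eq_or_lt_of_le hx with h | h
  · rw [← h]
    rcases eq_or_lt_of_le hy with h' | h'
    · rw [← h']; simp
    · rw [zero_add, div_self h'.ne']; simp
  rcases eq_or_lt_of_le hy with h' | h'
  · rw [← h']
    rw [add_zero, div_self h.ne']; simp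
  have hxy : (0:ℝ) < x + y := by linarith
  rw [Real.logb_div h.ne' hxy.ne', Real.logb_div h'.ne' hxy.ne']; ring
lemma E3 (p₁ p₂ : ℝ) (h₁ : p₁ ∈ Set.Icc (0:ℝ) 1) (h₂ : p₂ ∈ Set.Icc (0:ℝ) 1) :
    condEnt p₁ p₂ (fun ω => (U₁ ω, U₂ ω)) (fun ω => (Y₁ ω, Y₂ ω)) = binH p₁ + binH p₂ := by
  obtain ⟨ha, hb⟩ := h₁; obtain ⟨hc, hd⟩ := h₂
  have n1 : (0:ℝ) ≤ 1 - p₁ := by linarith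
  have n2 : (0:ℝ) ≤ 1 - p₂ := by linarith
  simp only [condEnt, mC', m0', qd]
  simp only [Fintype.sum_prod_type, sum_zmod2]
  simp (config := { decide := true }) only [ber, if_true, if_false]
  unfold binH
  linear_combination (-1:ℝ) * L2 p₁ p₂ ha hc + (-1:ℝ) * L2 p₁ (1-p₂) ha n2 +
    (-1:ℝ) * L2 (1-p₁) p₂ n1 hc + (-1:ℝ) * L2 (1-p₁) (1-p₂) n1 n2
lemma E2 (p₁ p₂ : ℝ) (h₁ : p₁ ∈ Set.Icc (0:ℝ) 1) (h₂ : p₂ ∈ Set.Icc (0:ℝ) 1) :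
    condEnt p₁ p₂ U₂ (fun ω => (Y₁ ω, Y₂ ω, U₁ ω))
      = binH p₁ + binH p₂ - binH (bconv p₁ p₂) := by
  obtain ⟨ha, hb⟩ := h₁; obtain ⟨hc, hd⟩ := h₂
  have n1 : (0:ℝ) ≤ 1 - p₁ := by linarith
  have n2 : (0:ℝ) ≤ 1 - p₂ := by linarith
  simp only [condEnt, mA', mB', qd2]
  simp only [Fintype.sum_prod_type, sum_zmod2]
  simp (config := { decide := true }) only [ber, if_true, if_false]
  unfold binH
  rw [show 1 - bconv p₁ p₂ = p₁*p₂ + (1-p₁)*(1-p₂) by unfold bconv; ring,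
      show bconv p₁ p₂ = p₁*(1-p₂) + (1-p₁)*p₂ by unfold bconv; ring]
  linear_combination (-1:ℝ) * L1 (p₁*p₂) ((1-p₁)*(1-p₂)) (by positivity) (by positivity) +
    (-1:ℝ) * L1 (p₁*(1-p₂)) ((1-p₁)*p₂) (by positivity) (by positivity) +
    (-1:ℝ) * L2 p₁ p₂ ha hc + (-1:ℝ) * L2 p₁ (1-p₂) ha n2 +
    (-1:ℝ) * L2 (1-p₁) p₂ n1 hc + (-1:ℝ) * L2 (1-p₁) (1-p₂) n1 n2

theorem arikan_entropy_conservation (p₁ p₂ : ℝ)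
    (h₁ : p₁ ∈ Set.Icc (0:ℝ) 1) (h₂ : p₂ ∈ Set.Icc (0:ℝ) 1) :
    condEnt p₁ p₂ U₁ (fun ω => (Y₁ ω, Y₂ ω)) = binH (bconv p₁ p₂) ∧
    binH (bconv p₁ p₂) + condEnt p₁ p₂ U₂ (fun ω => (Y₁ ω, Y₂ ω, U₁ ω)) = binH p₁ + binH p₂ ∧
    condEnt p₁ p₂ U₁ (fun ω => (Y₁ ω, Y₂ ω)) +
      condEnt p₁ p₂ U₂ (fun ω => (Y₁ ω, Y₂ ω, U₁ ω)) =
      condEnt p₁ p₂ (fun ω => (U₁ ω, U₂ ω)) (fun ω => (Y₁ ω, Y₂ ω)) := by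
  refine ⟨E1 p₁ p₂, ?_, ?_⟩
  · rw [E2 p₁ p₂ h₁ h₂]; ring
  · rw [E1 p₁ p₂, E2 p₁ p₂ h₁ h₂, E3 p₁ p₂ h₁ h₂]; ring
end

section
/- Under the constraint Σᵢ pᵢρᵢ = D with fixed positive weights ρᵢ and pᵢ ∈ [0, 1/2], the maximum of Σᵢ h₂(pᵢ) is attained by a Gibbs distribution: there exists λ ≥ 0 such that pᵢ = exp(-λρᵢ)/(1+exp(-λρᵢ)) maximizes Σᵢ h₂(pᵢ) among all feasible p, provided D lies in the appropriate range (0 < D ≤ ½Σᵢρᵢ). -/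
lemma crossent (p q : ℝ) (hp0 : 0 ≤ p) (hp1 : p ≤ 1) (hq0 : 0 < q) (hq1 : q < 1) :
    -p * Real.log p - (1-p) * Real.log (1-p) ≤ -p * Real.log q - (1-p) * Real.log (1-q) := by
  rcases eq_or_lt_of_le hp0 with h0 | h0
  · have hlog : Real.log (1-q) ≤ 0 := Real.log_nonpos (by linarith) (by linarith)
    simp [← h0]
    linarith
  rcases eq_or_lt_of_le hp1 with h1 | h1
  · have hlog : Real.log q ≤ 0 := Real.log_nonpos (le_of_lt hq0) (le_of_lt hq1)
    subst h1
    simp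
    linarith
  · have hp1' : 0 < 1 - p := by linarith
    have key1 : p * (Real.log q - Real.log p) ≤ q - p := by
      have h := Real.log_le_sub_one_of_pos (show 0 < q / p by positivity)
      rw [Real.log_div (ne_of_gt hq0) (ne_of_gt h0)] at h
      have := mul_le_mul_of_nonneg_left h (le_of_lt h0)
      calc p * (Real.log q - Real.log p) ≤ p * (q/p - 1) := this
        _ = q - p := by field_simp
    have key2 : (1-p) * (Real.log (1-q) - Real.log (1-p)) ≤ p - q := by
      have h := Real.log_le_sub_one_of_pos (div_pos (show (0:ℝ) < 1-q by linarith) hp1')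
      rw [Real.log_div (by linarith) (ne_of_gt hp1')] at h
      have := mul_le_mul_of_nonneg_left h (le_of_lt hp1')
      calc (1-p) * (Real.log (1-q) - Real.log (1-p)) ≤ (1-p) * ((1-q)/(1-p) - 1) := this
        _ = p - q := by field_simp; ring
    nlinarith [key1, key2]

lemma binH_le (p q : ℝ) (hp0 : 0 ≤ p) (hp1 : p ≤ 1) (hq0 : 0 < q) (hq1 : q < 1) :
    binH p ≤ binH q + (p - q) * (Real.log (1-q) - Real.log q) / Real.log 2 := by
  have h2 : (0:ℝ) < Real.log 2 := Real.log_pos (by norm_num)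
  have hce := crossent p q hp0 hp1 hq0 hq1
  have hA : binH p = (-p * Real.log p - (1-p)*Real.log (1-p)) / Real.log 2 := by
    unfold binH; rw [Real.logb, Real.logb]; ring
  have hB : binH q = (-q * Real.log q - (1-q)*Real.log (1-q)) / Real.log 2 := by
    unfold binH; rw [Real.logb, Real.logb]; ring
  rw [hA, hB, ← add_div, div_le_div_iff_of_pos_right h2]
  nlinarith [hce]

theorem gibbs_maximizes_DLS (N : ℕ) (ρ : Fin N → ℝ) (hρ : ∀ i, 0 < ρ i) (D : ℝ)
    (hD : 0 < D) (hD2 : D ≤ (1/2) * ∑ i, ρ i) :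
    ∃ l : ℝ, 0 ≤ l ∧
      (∑ i, (Real.exp (-l * ρ i) / (1 + Real.exp (-l * ρ i))) * ρ i = D) ∧
      (∀ p : Fin N → ℝ, (∀ i, p i ∈ Set.Icc (0:ℝ) (1/2)) → (∑ i, p i * ρ i = D) →
        ∑ i, binH (p i) ≤ ∑ i, binH (Real.exp (-l * ρ i) / (1 + Real.exp (-l * ρ i)))) := by
  set F : ℝ → ℝ := fun l => ∑ i, (Real.exp (-l * ρ i) / (1 + Real.exp (-l * ρ i))) * ρ i with hF
  have hden : ∀ (l : ℝ) (i : Fin N), (0:ℝ) < 1 + Real.exp (-l * ρ i) := fun l i => by positivity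
  have hcont : Continuous F := by
    apply continuous_finset_sum
    intro i _
    exact (((Real.continuous_exp.comp (by fun_prop)).div
      (continuous_const.add (Real.continuous_exp.comp (by fun_prop)))
      (fun l => ne_of_gt (hden l i))).mul continuous_const)
  have htend : Filter.Tendsto F Filter.atTop (nhds 0) := by
    have : (0:ℝ) = ∑ i : Fin N, (0 / (1 + 0)) * ρ i := by simp
    rw [this]
    apply tendsto_finset_sum
    intro i _
    have hx : Filter.Tendsto (fun l : ℝ => -l * ρ i) Filter.atTop Filter.atBot := by
      have := (Filter.tendsto_id.atTop_mul_const (hρ i) : Filter.Tendsto (fun l : ℝ => l * ρ i) Filter.atTop Filter.atTop)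
      exact (Filter.tendsto_neg_atTop_atBot.comp this).congr fun l => (neg_mul l (ρ i)).symm
    have he : Filter.Tendsto (fun l : ℝ => Real.exp (-l * ρ i)) Filter.atTop (nhds 0) :=
      Real.tendsto_exp_atBot.comp hx
    exact ((he.div (tendsto_const_nhds.add he) (by norm_num)).mul_const (ρ i))
  -- F 0 ≥ D
  have hF0 : F 0 = (1/2) * ∑ i, ρ i := by
    rw [hF, Finset.mul_sum]
    apply Finset.sum_congr rfl
    intro i _
    norm_num
  have hFL : ∃ L : ℝ, 0 ≤ L ∧ F L < D := by
    have := (htend.eventually_lt_const hD).and (Filter.eventually_ge_atTop (0:ℝ))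
    obtain ⟨L, h1, h2⟩ := this.exists
    exact ⟨L, h2, h1⟩
  obtain ⟨L, hL0, hLD⟩ := hFL
  have hivt : D ∈ F '' Set.Icc 0 L := by
    apply intermediate_value_Icc' hL0 hcont.continuousOn
    constructor
    · exact le_of_lt hLD
    · rw [hF0]; exact hD2
  obtain ⟨l, hl_mem, hlD⟩ := hivt
  refine ⟨l, hl_mem.1, hlD, ?_⟩
  intro p hp hpsum
  have h2 : (0:ℝ) < Real.log 2 := Real.log_pos (by norm_num)
  set q : Fin N → ℝ := fun i => Real.exp (-l * ρ i) / (1 + Real.exp (-l * ρ i)) with hq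
  have hq0 : ∀ i, 0 < q i := fun i => by
    have := hden l i; positivity
  have hq1 : ∀ i, q i < 1 := fun i => by
    rw [hq]
    rw [div_lt_one (hden l i)]
    linarith [Real.exp_pos (-l * ρ i)]
  have hlogq : ∀ i, Real.log (1 - q i) - Real.log (q i) = l * ρ i := by
    intro i
    have hE : 0 < Real.exp (-l * ρ i) := Real.exp_pos _
    have h1q : 1 - q i = 1 / (1 + Real.exp (-l * ρ i)) := by
      rw [hq]; field_simp; ring
    rw [h1q, hq]
    rw [Real.log_div one_ne_zero (ne_of_gt (hden l i)),
        Real.log_div (ne_of_gt hE) (ne_of_gt (hden l i)), Real.log_exp, Real.log_one]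
    ring
  calc ∑ i, binH (p i)
      ≤ ∑ i, (binH (q i) + (p i - q i) * (l * ρ i) / Real.log 2) := by
        apply Finset.sum_le_sum
        intro i _
        have := binH_le (p i) (q i) (hp i).1 (le_trans (hp i).2 (by norm_num)) (hq0 i) (hq1 i)
        rwa [hlogq i] at this
    _ = ∑ i, binH (q i) + ∑ i, (p i - q i) * (l * ρ i) / Real.log 2 := by
        rw [Finset.sum_add_distrib]
    _ = ∑ i, binH (q i) := by
        have hz : ∑ i, (p i - q i) * (l * ρ i) / Real.log 2
            = l / Real.log 2 * (∑ i, p i * ρ i - ∑ i, q i * ρ i) := by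
          rw [← Finset.sum_sub_distrib, Finset.mul_sum]
          exact Finset.sum_congr rfl fun i _ => by ring
        rw [hz, hpsum]
        rw [show ∑ i, q i * ρ i = D from hlD]
        ring
end
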